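/- Let s and D be positive integers with s odd and s + 1 > 3D. Then there exists exactly one positive real number x_0 such that (x_0+3)^D (x_0+1)^{s+1} = x_0^D (x_0+2)^{s+1}; equivalently, the function f(x) = ((x+3)/x)^D · ((x+1)/(x+2))^{s+1} takes the value 1 at exactly one positive real x. Moreover, f is strictly decreasing on (0, x_1] and strictly increasing on [x_1, ∞) for a unique positive real x_1, with lim_{x→0⁺} f(x) = +∞ and lim_{x→+∞} f(x) = 1. -/

import Mathlib

/-- The auxiliary function `f(x) = ((x+3)/x)^D ((x+1)/(x+2))^{s+1}`. -/
noncomputable def fAux (s D : ℕ) (x : ℝ) : ℝ :=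
  ((x + 3) / x) ^ D * ((x + 1) / (x + 2)) ^ (s + 1)

noncomputable def gAux (s D : ℕ) (x : ℝ) : ℝ :=
  (D : ℝ) * (Real.log (x + 3) - Real.log x)
    + ((s : ℝ) + 1) * (Real.log (x + 1) - Real.log (x + 2))

lemma fAux_eq_exp (s D : ℕ) {x : ℝ} (hx : 0 < x) :
    fAux s D x = Real.exp (gAux s D x) := by
  have hx3 : (0:ℝ) < x + 3 := by linarith
  have hx1 : (0:ℝ) < x + 1 := by linarith
  have hx2 : (0:ℝ) < x + 2 := by linarith
  have hcast : ((s : ℝ) + 1) = ((s + 1 : ℕ) : ℝ) := by push_cast; ring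
  rw [gAux, hcast, Real.exp_add, Real.exp_nat_mul, Real.exp_nat_mul,
    Real.exp_sub, Real.exp_sub, Real.exp_log hx3, Real.exp_log hx,
    Real.exp_log hx1, Real.exp_log hx2]
  rfl

lemma hasDerivAt_gAux (s D : ℕ) {x : ℝ} (hx : 0 < x) :
    HasDerivAt (gAux s D)
      ((D : ℝ) * ((x + 3)⁻¹ - x⁻¹) + ((s : ℝ) + 1) * ((x + 1)⁻¹ - (x + 2)⁻¹)) x := by
  have hx3 : (0:ℝ) < x + 3 := by linarith
  have hx1 : (0:ℝ) < x + 1 := by linarith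
  have hx2 : (0:ℝ) < x + 2 := by linarith
  have l3 : HasDerivAt (fun y : ℝ => Real.log (y + 3)) (x + 3)⁻¹ x := by
    simpa using ((hasDerivAt_id x).add_const (3:ℝ)).log hx3.ne'
  have l0 : HasDerivAt (fun y : ℝ => Real.log y) x⁻¹ x := Real.hasDerivAt_log hx.ne'
  have l1 : HasDerivAt (fun y : ℝ => Real.log (y + 1)) (x + 1)⁻¹ x := by
    simpa using ((hasDerivAt_id x).add_const (1:ℝ)).log hx1.ne'
  have l2 : HasDerivAt (fun y : ℝ => Real.log (y + 2)) (x + 2)⁻¹ x := by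
    simpa using ((hasDerivAt_id x).add_const (2:ℝ)).log hx2.ne'
  exact ((l3.sub l0).const_mul _).add ((l1.sub l2).const_mul _)

lemma deriv_gAux_eq (s D : ℕ) {x : ℝ} (hx : 0 < x) :
    deriv (gAux s D) x
      = (((s:ℝ) + 1 - 3 * D) * (x ^ 2 + 3 * x) - 6 * D)
          / (x * (x + 3) * (x + 1) * (x + 2)) := by
  rw [(hasDerivAt_gAux s D hx).deriv]
  have hx3 : (0:ℝ) < x + 3 := by linarith
  have hx1 : (0:ℝ) < x + 1 := by linarith
  have hx2 : (0:ℝ) < x + 2 := by linarith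
  field_simp
  ring

theorem stmt10 (s D : ℕ) (hs : 0 < s) (hD : 0 < D) (hodd : Odd s) (hsD : 3 * D < s + 1) :
    (∃! x0 : ℝ, 0 < x0 ∧
        (x0 + 3) ^ D * (x0 + 1) ^ (s + 1) = x0 ^ D * (x0 + 2) ^ (s + 1)) ∧
    (∃! x0 : ℝ, 0 < x0 ∧ fAux s D x0 = 1) ∧
    (∃! x1 : ℝ, 0 < x1 ∧ StrictAntiOn (fAux s D) (Set.Ioc 0 x1) ∧
        StrictMonoOn (fAux s D) (Set.Ici x1)) ∧
    Filter.Tendsto (fAux s D) (nhdsWithin 0 (Set.Ioi 0)) Filter.atTop ∧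
    Filter.Tendsto (fAux s D) Filter.atTop (nhds 1) := by
  have ha : 0 < (s:ℝ) + 1 - 3 * D := by
    have : (3 * D : ℝ) < (s : ℝ) + 1 := by exact_mod_cast hsD
    linarith
  set a : ℝ := (s:ℝ) + 1 - 3 * D with ha_def
  set q : ℝ → ℝ := fun x => a * (x ^ 2 + 3 * x) - 6 * D with hq_def
  -- q is strictly increasing on [0, ∞)
  have hqmono : ∀ x y : ℝ, 0 ≤ x → x < y → q x < q y := by
    intro x y hx hxy
    have : x ^ 2 + 3 * x < y ^ 2 + 3 * y := by nlinarith
    have := mul_lt_mul_of_pos_left this ha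
    simp only [hq_def]
    linarith
  -- find the root x1 of q
  obtain ⟨x1, hx1mem, hqx1⟩ : ∃ x1 ∈ Set.Ioo (0:ℝ) (6 * D / a + 1), q x1 = 0 := by
    have hM : (0:ℝ) ≤ 6 * D / a + 1 := by positivity
    have hcont : ContinuousOn q (Set.Icc 0 (6 * D / a + 1)) := by fun_prop
    have h0 : q 0 = -(6 * D) := by simp [hq_def]
    have hMpos : 0 < q (6 * D / a + 1) := by
      have hDpos : (0:ℝ) < 6 * D := by positivity
      have h1 : a * (6 * D / a) = 6 * D := by field_simp
      have hM1 : (0:ℝ) < 6 * D / a + 1 := by positivity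
      have : (6 * D / a + 1) ≤ (6 * D / a + 1) ^ 2 + 3 * (6 * D / a + 1) := by nlinarith
      have := mul_le_mul_of_nonneg_left this ha.le
      simp only [hq_def]
      have h2 : a * (6 * D / a + 1) = 6 * D + a := by field_simp
      nlinarith
    have hz : (0:ℝ) ∈ Set.Ioo (q 0) (q (6 * D / a + 1)) := by
      constructor
      · rw [h0]
        have : (0:ℝ) < 6 * D := by positivity
        linarith
      · exact hMpos
    obtain ⟨x1, hx1, hq1⟩ := intermediate_value_Ioo hM hcont hz
    exact ⟨x1, hx1, hq1⟩
  have hx1pos : 0 < x1 := hx1mem.1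
  -- sign of q
  have hqneg : ∀ x : ℝ, 0 < x → x < x1 → q x < 0 := fun x hx hxx1 => by
    have := hqmono x x1 hx.le hxx1; linarith [hqx1] 
  have hqpos : ∀ x : ℝ, x1 < x → 0 < q x := fun x hxx1 => by
    have := hqmono x1 x hx1pos.le hxx1; linarith [hqx1]
  -- continuity of gAux on positive reals
  have hgc : ContinuousOn (gAux s D) (Set.Ioi 0) := fun x hx =>
    ((hasDerivAt_gAux s D hx).continuousAt).continuousWithinAt
  have hPpos : ∀ x : ℝ, 0 < x → 0 < x * (x + 3) * (x + 1) * (x + 2) := by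
    intro x hx; positivity
  -- strict antitonicity of gAux on (0, x1]
  have hganti : StrictAntiOn (gAux s D) (Set.Ioc 0 x1) := by
    apply strictAntiOn_of_deriv_neg (convex_Ioc 0 x1)
      (hgc.mono (fun x hx => hx.1))
    intro x hx
    rw [interior_Ioc] at hx
    rw [deriv_gAux_eq s D hx.1]
    apply div_neg_of_neg_of_pos
    · exact hqneg x hx.1 hx.2
    · exact hPpos x hx.1
  have hgmono : StrictMonoOn (gAux s D) (Set.Ici x1) := by
    apply strictMonoOn_of_deriv_pos (convex_Ici x1)
      (hgc.mono (fun x hx => lt_of_lt_of_le hx1pos hx))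
    intro x hx
    rw [interior_Ici] at hx
    rw [deriv_gAux_eq s D (hx1pos.trans hx)]
    exact div_pos (hqpos x hx) (hPpos x (hx1pos.trans hx))
  -- transfer to fAux
  have hfanti : StrictAntiOn (fAux s D) (Set.Ioc 0 x1) := by
    intro x hx y hy hxy
    rw [fAux_eq_exp s D hx.1, fAux_eq_exp s D hy.1]
    exact Real.exp_lt_exp.mpr (hganti hx hy hxy)
  have hfmono : StrictMonoOn (fAux s D) (Set.Ici x1) := by
    intro x hx y hy hxy
    rw [fAux_eq_exp s D (lt_of_lt_of_le hx1pos hx), fAux_eq_exp s D (lt_of_lt_of_le hx1pos hy)]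
    exact Real.exp_lt_exp.mpr (hgmono hx hy hxy)
  -- continuity of fAux
  have hfc : ContinuousOn (fAux s D) (Set.Ioi 0) := by
    have h1 : ContinuousOn (fun x => Real.exp (gAux s D x)) (Set.Ioi 0) :=
      Real.continuous_exp.comp_continuousOn hgc
    exact h1.congr (fun x hx => fAux_eq_exp s D hx)
  -- limit at infinity
  have htop1 : Filter.Tendsto (fAux s D) Filter.atTop (nhds 1) := by
    have t1 : Filter.Tendsto (fun x : ℝ => (x + 3) / x) Filter.atTop (nhds 1) := by
      have he : (fun x : ℝ => 1 + 3 * x⁻¹) =ᶠ[Filter.atTop] (fun x : ℝ => (x + 3) / x) := by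
        filter_upwards [Filter.eventually_gt_atTop (0:ℝ)] with x hx
        field_simp
      refine Filter.Tendsto.congr' he ?_
      have : Filter.Tendsto (fun x : ℝ => 1 + 3 * x⁻¹) Filter.atTop (nhds (1 + 3 * 0)) :=
        tendsto_const_nhds.add (tendsto_inv_atTop_zero.const_mul 3)
      simpa using this
    have t2 : Filter.Tendsto (fun x : ℝ => (x + 1) / (x + 2)) Filter.atTop (nhds 1) := by
      have he : (fun x : ℝ => 1 - (x + 2)⁻¹) =ᶠ[Filter.atTop] (fun x : ℝ => (x + 1) / (x + 2)) := by
        filter_upwards [Filter.eventually_gt_atTop (0:ℝ)] with x hx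
        have : x + 2 ≠ 0 := by linarith
        field_simp
        ring
      refine Filter.Tendsto.congr' he ?_
      have hi : Filter.Tendsto (fun x : ℝ => (x + 2)⁻¹) Filter.atTop (nhds 0) := by
        have : Filter.Tendsto (fun x : ℝ => x + 2) Filter.atTop Filter.atTop :=
          Filter.tendsto_atTop_add_const_right _ 2 Filter.tendsto_id
        exact this.inv_tendsto_atTop
      have : Filter.Tendsto (fun x : ℝ => 1 - (x + 2)⁻¹) Filter.atTop (nhds (1 - 0)) :=
        tendsto_const_nhds.sub hi
      simpa using this
    have := (t1.pow D).mul (t2.pow (s + 1))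
    simp only [one_pow, mul_one] at this
    exact this
  -- limit at 0+
  have htop0 : Filter.Tendsto (fAux s D) (nhdsWithin 0 (Set.Ioi 0)) Filter.atTop := by
    have A : Filter.Tendsto (fun x : ℝ => (x + 3) / x) (nhdsWithin 0 (Set.Ioi 0))
        Filter.atTop := by
      have he : (fun x : ℝ => 1 + 3 * x⁻¹) =ᶠ[nhdsWithin 0 (Set.Ioi 0)]
          (fun x : ℝ => (x + 3) / x) := by
        filter_upwards [self_mem_nhdsWithin] with x hx
        have hx' : (0:ℝ) < x := hx
        field_simp
      refine Filter.Tendsto.congr' he ?_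
      exact Filter.tendsto_atTop_add_const_left _ 1 (tendsto_inv_nhdsGT_zero.const_mul_atTop (by norm_num))
    have A' : Filter.Tendsto (fun x : ℝ => ((x + 3) / x) ^ D) (nhdsWithin 0 (Set.Ioi 0))
        Filter.atTop := (Filter.tendsto_pow_atTop hD.ne').comp A
    have B : Filter.Tendsto (fun x : ℝ => ((x + 1) / (x + 2)) ^ (s + 1))
        (nhdsWithin 0 (Set.Ioi 0)) (nhds ((1 / 2 : ℝ) ^ (s + 1))) := by
      have hcont : ContinuousAt (fun x : ℝ => ((x + 1) / (x + 2)) ^ (s + 1)) 0 := by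
        apply ContinuousAt.pow
        exact ContinuousAt.div (by fun_prop) (by fun_prop) (by norm_num)
      have := hcont.tendsto
      norm_num at this
      exact this.mono_left nhdsWithin_le_nhds
    have := Filter.Tendsto.atTop_mul_pos (show (0:ℝ) < (1/2) ^ (s+1) by positivity) A' B
    exact this
  -- fAux ≤ 1 on [x1, ∞)
  have hle1 : ∀ y : ℝ, x1 ≤ y → fAux s D y ≤ 1 := by
    intro y hy
    refine ge_of_tendsto htop1 ?_
    filter_upwards [Filter.eventually_ge_atTop y] with z hz
    exact hfmono.monotoneOn hy (hy.trans hz) hz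
  have hlt1 : ∀ y : ℝ, x1 ≤ y → fAux s D y < 1 := by
    intro y hy
    have h1 : fAux s D y < fAux s D (y + 1) :=
      hfmono (Set.mem_Ici.mpr hy) (Set.mem_Ici.mpr (by linarith)) (by linarith)
    have h2 := hle1 (y + 1) (by linarith)
    linarith
  -- existence of x0 in (0, x1) with fAux = 1
  obtain ⟨x0, hx0mem, hfx0⟩ : ∃ x0 ∈ Set.Ioo (0:ℝ) x1, fAux s D x0 = 1 := by
    have hev : ∀ᶠ x in nhdsWithin (0:ℝ) (Set.Ioi 0), 2 ≤ fAux s D x :=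
      htop0.eventually_ge_atTop 2
    have hio : Set.Ioo (0:ℝ) x1 ∈ nhdsWithin (0:ℝ) (Set.Ioi 0) :=
      Ioo_mem_nhdsGT_of_mem ⟨le_refl _, hx1pos⟩
    obtain ⟨ε, hε2, hεmem⟩ := (hev.and (Filter.eventually_mem_set.mpr hio)).exists
    have hεpos : 0 < ε := hεmem.1
    have hεx1 : ε ≤ x1 := hεmem.2.le
    have hcc : ContinuousOn (fAux s D) (Set.Icc ε x1) :=
      hfc.mono (fun x hx => lt_of_lt_of_le hεpos hx.1)
    have h1mem : (1:ℝ) ∈ Set.Ioo (fAux s D x1) (fAux s D ε) :=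
      ⟨hlt1 x1 le_rfl, by linarith⟩
    obtain ⟨x0, hx0, hfx0⟩ := intermediate_value_Ioo' hεx1 hcc h1mem
    exact ⟨x0, ⟨hεpos.trans hx0.1, hx0.2⟩, hfx0⟩
  -- any positive solution of fAux = 1 is in (0, x1)
  have hsol : ∀ y : ℝ, 0 < y → fAux s D y = 1 → y ∈ Set.Ioc (0:ℝ) x1 := by
    intro y hy hfy
    refine ⟨hy, ?_⟩
    by_contra h
    push_neg at h
    exact absurd hfy (ne_of_lt (hlt1 y h.le))
  have huniq : ∀ y : ℝ, 0 < y → fAux s D y = 1 → y = x0 := by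
    intro y hy hfy
    exact hfanti.injOn (hsol y hy hfy)
      (hsol x0 hx0mem.1 hfx0) (by rw [hfy, hfx0])
  -- equivalence of the polynomial equation with fAux = 1
  have hiff : ∀ x : ℝ, 0 < x →
      (((x + 3) ^ D * (x + 1) ^ (s + 1) = x ^ D * (x + 2) ^ (s + 1)) ↔ fAux s D x = 1) := by
    intro x hx
    have hx2 : (0:ℝ) < x + 2 := by linarith
    rw [fAux, div_pow, div_pow, div_mul_div_comm,
      div_eq_one_iff_eq (by positivity : x ^ D * (x + 2) ^ (s + 1) ≠ 0)]
  refine ⟨⟨x0, ⟨hx0mem.1, (hiff x0 hx0mem.1).mpr hfx0⟩, ?_⟩,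
    ⟨x0, ⟨hx0mem.1, hfx0⟩, fun y hy => huniq y hy.1 hy.2⟩,
    ⟨x1, ⟨hx1pos, hfanti, hfmono⟩, ?_⟩, htop0, htop1⟩
  · rintro y ⟨hy, heq⟩
    exact huniq y hy ((hiff y hy).mp heq)
  · rintro y ⟨hy, hyanti, hymono⟩
    by_contra hne
    rcases lt_or_gt_of_ne hne with h | h
    · -- y < x1
      have h1 : fAux s D y < fAux s D x1 := hymono (le_refl y) h.le h
      have h2 : fAux s D x1 < fAux s D y := hfanti ⟨hy, h.le⟩ ⟨hx1pos, le_refl x1⟩ h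
      linarith
    · -- x1 < y
      have h1 : fAux s D x1 < fAux s D y := hfmono (le_refl x1) h.le h
      have h2 : fAux s D y < fAux s D x1 := hyanti ⟨hx1pos, h.le⟩ ⟨hy, le_refl y⟩ h
      linarith
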